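/- For a prime p, a positive integer m with p-adic valuation α (i.e. p^α || m), and a real number s > 1, one has ∑_{ν=0}^{∞} a_m(p^ν)/p^{νs} = (1 - p^{-s})·(1 + p^{-(s-1)} + p^{-2(s-1)} + ... + p^{-α(s-1)}), where a_m(n) = μ(n/gcd(m,n))·φ(n)/φ(n/gcd(m,n)). -/

import Mathlib

/-- The coefficients `a_m(n) = μ(n/gcd(m,n)) · φ(n)/φ(n/gcd(m,n))`. -/
noncomputable def ramanujanCoeff (m n : ℕ) : ℚ :=
  ((ArithmeticFunction.moebius (n / Nat.gcd m n) : ℤ) : ℚ) *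
    (Nat.totient n : ℚ) / (Nat.totient (n / Nat.gcd m n) : ℚ)

lemma gcd_pow (p : ℕ) (hp : p.Prime) (m : ℕ) (hm : 0 < m) (ν : ℕ) :
    Nat.gcd m (p ^ ν) = p ^ min (m.factorization p) ν := by
  obtain ⟨i, hi, hd⟩ := (Nat.dvd_prime_pow hp).mp (Nat.gcd_dvd_right m (p ^ ν))
  rw [hd]
  congr 1
  have h := Nat.factorization_gcd hm.ne' (pow_ne_zero ν hp.pos.ne')
  have := congrArg (fun f => f p) h
  simpa [hd, hp.factorization_pow] using this

lemma coeff_eval (p : ℕ) (hp : p.Prime) (m : ℕ) (hm : 0 < m) (ν : ℕ) :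
    ramanujanCoeff m (p ^ ν) =
      if ν ≤ m.factorization p then (Nat.totient (p ^ ν) : ℚ)
      else if ν = m.factorization p + 1 then -((p : ℚ) ^ m.factorization p) else 0 := by
  set α := m.factorization p with hα
  have hq : p ^ ν / Nat.gcd m (p ^ ν) = p ^ (ν - min α ν) := by
    rw [gcd_pow p hp m hm ν, Nat.pow_div (min_le_right α ν) hp.pos]
  unfold ramanujanCoeff
  rw [hq]
  rcases le_or_gt ν α with h | h
  · have : ν - min α ν = 0 := by omega
    simp [this, h]
  · have hmin : min α ν = α := by omega
    rcases eq_or_ne ν (α + 1) with rfl | hne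
    · rw [hmin]
      have h1 : α + 1 - α = 1 := by omega
      rw [h1, pow_one]
      rw [ArithmeticFunction.moebius_apply_prime hp]
      rw [Nat.totient_prime_pow hp (Nat.succ_pos α), Nat.totient_prime hp]
      push_cast [Nat.cast_sub hp.one_lt.le]
      have hne1 : (p:ℚ) - 1 ≠ 0 := by
        have : (1:ℚ) < (p:ℚ) := by exact_mod_cast hp.one_lt
        linarith
      field_simp
      simp
    · have h2 : 2 ≤ ν - min α ν := by omega
      rw [ArithmeticFunction.moebius_apply_prime_pow hp (by omega)]
      simp [hne, show ¬ ν ≤ α by omega]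
      omega

lemma alg (pr x : ℝ) (α : ℕ) :
    (∑ ν ∈ Finset.range (α + 2),
      (if ν ≤ α then (if ν = 0 then 1 else pr ^ (ν - 1) * (pr - 1)) else -(pr ^ α)) * x ^ ν)
    = (1 - x) * ∑ j ∈ Finset.range (α + 1), (pr * x) ^ j := by
  induction α with
  | zero => simp [Finset.sum_range_succ]; ring
  | succ n ih =>
    rw [Finset.sum_range_succ, Finset.sum_range_succ]
    have hcongr : ∑ ν ∈ Finset.range (n + 1),
        (if ν ≤ n + 1 then (if ν = 0 then 1 else pr ^ (ν - 1) * (pr - 1)) else -(pr ^ (n+1))) * x ^ ν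
      = ∑ ν ∈ Finset.range (n + 1),
        (if ν ≤ n then (if ν = 0 then 1 else pr ^ (ν - 1) * (pr - 1)) else -(pr ^ n)) * x ^ ν := by
      apply Finset.sum_congr rfl
      intro ν hν
      have : ν ≤ n := by simpa using Nat.lt_succ_iff.mp (Finset.mem_range.mp hν)
      simp [this, this.trans (Nat.le_succ n)]
    rw [hcongr]
    have hsplit : ∑ ν ∈ Finset.range (n + 1),
        (if ν ≤ n then (if ν = 0 then 1 else pr ^ (ν - 1) * (pr - 1)) else -(pr ^ n)) * x ^ ν
      = (∑ ν ∈ Finset.range (n + 2),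
        (if ν ≤ n then (if ν = 0 then 1 else pr ^ (ν - 1) * (pr - 1)) else -(pr ^ n)) * x ^ ν)
        + pr ^ n * x ^ (n+1) := by
      conv_rhs => rw [Finset.sum_range_succ]
      rw [if_neg (Nat.not_succ_le_self n)]
      ring
    rw [hsplit, ih, Finset.sum_range_succ (f := fun j => (pr*x)^j) (n := n+1)]
    rw [if_pos (le_refl (n+1)), if_neg (Nat.succ_ne_zero n),
      if_neg (by omega : ¬ (n + 1 + 1 ≤ n + 1))]
    have e1 : (n + 1 : ℕ) - 1 = n := rfl
    rw [e1]
    ring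

/-- Euler factor evaluation: for a prime `p`, `m > 0` with `p`-adic valuation `α`, and `s > 1`,
`∑_{ν=0}^∞ a_m(p^ν)/p^{νs} = (1 - p^{-s}) · ∑_{j=0}^{α} p^{-j(s-1)}`. -/
theorem euler_factor_eval (p : ℕ) (hp : p.Prime) (m : ℕ) (hm : 0 < m) (s : ℝ) (hs : 1 < s) :
    ∑' ν : ℕ, (ramanujanCoeff m (p ^ ν) : ℝ) / (p : ℝ) ^ ((ν : ℝ) * s)
      = (1 - (p : ℝ) ^ (-s)) *
        ∑ j ∈ Finset.range (m.factorization p + 1), (p : ℝ) ^ (-(j : ℝ) * (s - 1)) := by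
  set α := m.factorization p with hα
  have hp0 : (0:ℝ) < p := by exact_mod_cast hp.pos
  set x : ℝ := (p:ℝ) ^ (-s) with hx
  have hterm : ∀ ν : ℕ, (ramanujanCoeff m (p ^ ν) : ℝ) / (p : ℝ) ^ ((ν : ℝ) * s)
      = (ramanujanCoeff m (p ^ ν) : ℝ) * x ^ ν := by
    intro ν
    rw [hx, ← Real.rpow_natCast ((p:ℝ) ^ (-s)) ν, ← Real.rpow_mul hp0.le,
      div_eq_mul_inv, ← Real.rpow_neg hp0.le]
    congr 1
    ring
  have hzero : ∀ ν : ℕ, ν ∉ Finset.range (α + 2) →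
      (ramanujanCoeff m (p ^ ν) : ℝ) / (p : ℝ) ^ ((ν : ℝ) * s) = 0 := by
    intro ν hν
    have h2 : α + 2 ≤ ν := by simpa using Finset.mem_range.not.mp hν
    rw [coeff_eval p hp m hm ν, if_neg (by omega), if_neg (by omega)]
    simp
  rw [tsum_eq_sum hzero]
  have hsum : ∑ ν ∈ Finset.range (α + 2),
      (ramanujanCoeff m (p ^ ν) : ℝ) / (p : ℝ) ^ ((ν : ℝ) * s)
    = ∑ ν ∈ Finset.range (α + 2),
      (if ν ≤ α then (if ν = 0 then 1 else (p:ℝ) ^ (ν - 1) * ((p:ℝ) - 1)) else -((p:ℝ) ^ α)) * x ^ ν := by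
    apply Finset.sum_congr rfl
    intro ν hν
    rw [hterm ν, coeff_eval p hp m hm ν]
    have hν2 : ν < α + 2 := Finset.mem_range.mp hν
    congr 1
    rcases le_or_gt ν α with h | h
    · rw [if_pos h, if_pos h]
      rcases Nat.eq_zero_or_pos ν with rfl | hν0
      · simp
      · rw [if_neg hν0.ne', Nat.totient_prime_pow hp hν0]
        push_cast [Nat.cast_sub hp.one_lt.le]
        ring
    · have hν3 : ν = α + 1 := Nat.le_antisymm (Nat.lt_succ_iff.mp hν2) h
      subst hν3
      rw [if_neg (Nat.not_succ_le_self α), if_pos rfl, if_neg (Nat.not_succ_le_self α)]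
      push_cast
      ring
  rw [hsum, alg]
  have hpx : (p:ℝ) * x = (p:ℝ) ^ (1 - s) := by
    rw [hx, sub_eq_add_neg, Real.rpow_add hp0, Real.rpow_one]
  congr 1
  apply Finset.sum_congr rfl
  intro j _
  rw [hpx, ← Real.rpow_natCast ((p:ℝ) ^ (1 - s)) j, ← Real.rpow_mul hp0.le]
  congr 1
  ring
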